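/- If u, v ∈ 𝕍 and u is a prefix of v (as lists), then u = v. -/
import Mathlib


/-- The three truth symbols F, 0 (Z), T. -/
inductive TSym : Type
  | F | Z | T
deriving DecidableEq

open TSym

/-- The operation u ≫ v on lists of symbols. -/
def lexOp (u v : List TSym) : List TSym :=
  if u = [F] ∧ v = [F] then [F]
  else if u = [T] ∧ v = [T] then [T]
  else Z :: (u ++ v)

/-- The truth domain 𝕍 as an inductive predicate. -/
inductive Vmem : List TSym → Prop
  | F : Vmem [F]
  | T : Vmem [T]
  | op {u v : List TSym} : Vmem u → Vmem v → Vmem (lexOp u v)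

def symRank : TSym → ℕ
  | F => 0 | Z => 1 | T => 2

/-- The order F < 0 < T on symbols. -/
def symLt (a b : TSym) : Prop := symRank a < symRank b

/-- Lexicographic order on lists induced by F < 0 < T. -/
def listLt (u v : List TSym) : Prop := List.Lex symLt u v

/-- Pointwise negation F ↦ T, T ↦ F, 0 ↦ 0. -/
def symNeg : TSym → TSym
  | F => T | T => F | Z => Z

def negList (v : List TSym) : List TSym := v.map symNeg

def symVal : TSym → ℚ
  | F => -1 | Z => 0 | T => 1

/-- val([u₁,…,u_n]) = Σ symVal(u_i) · (1/3)^(i-1). -/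
def val : List TSym → ℚ
  | [] => 0
  | a :: t => symVal a + val t / 3

open Classical in
/-- Lexicographic minimum. -/
noncomputable def minL (u v : List TSym) : List TSym := if listLt u v then u else v

open Classical in
/-- Lexicographic maximum. -/
noncomputable def maxL (u v : List TSym) : List TSym := if listLt u v then v else u

def wt : TSym → ℤ
  | TSym.Z => 1 | _ => -1

def S (l : List TSym) : ℤ := (l.map wt).sum

lemma S_nil : S [] = 0 := rfl
lemma S_cons (a : TSym) (l : List TSym) : S (a :: l) = wt a + S l := by
  simp [S]
lemma S_append (l₁ l₂ : List TSym) : S (l₁ ++ l₂) = S l₁ + S l₂ := by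
  simp [S]

lemma prefix_split {q a b : List TSym} (h : q <+: a ++ b) :
    q <+: a ∨ ∃ r, q = a ++ r ∧ r <+: b := by
  obtain ⟨t, ht⟩ := h
  rcases List.append_eq_append_iff.mp ht with ⟨c, hc1, hc2⟩ | ⟨c, hc1, hc2⟩
  · left; exact ⟨c, hc1.symm⟩
  · right; exact ⟨c, hc1, ⟨t, hc2.symm⟩⟩

lemma singleton_case (a : TSym) (ha : wt a = -1) : S [a] = -1 ∧ ∀ p, p <+: [a] → p ≠ [a] → 0 ≤ S p := by
  refine ⟨by simp [S_cons, S_nil, ha], ?_⟩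
  rintro p hp hne
  rcases p with _ | ⟨b, q⟩
  · simp [S_nil]
  · obtain ⟨t, ht⟩ := hp
    simp only [List.cons_append, List.cons.injEq] at ht
    obtain ⟨rfl, ht⟩ := ht
    rcases List.append_eq_nil_iff.mp ht with ⟨rfl, -⟩
    exact absurd rfl hne

lemma good {w : List TSym} (hw : Vmem w) :
    S w = -1 ∧ ∀ p, p <+: w → p ≠ w → 0 ≤ S p := by
  induction hw with
  | F => exact singleton_case _ rfl
  | T => exact singleton_case _ rfl
  | @op u v hu hv ihu ihv =>
    unfold lexOp
    split
    · exact singleton_case _ rfl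
    split
    · exact singleton_case _ rfl
    obtain ⟨hSu, hPu⟩ := ihu
    obtain ⟨hSv, hPv⟩ := ihv
    constructor
    · simp [S_cons, S_append, hSu, hSv, wt]
    rintro p hp hne
    rcases p with _ | ⟨b, q⟩
    · simp [S_nil]
    obtain ⟨t, ht⟩ := hp
    simp only [List.cons_append, List.cons.injEq] at ht
    obtain ⟨rfl, ht⟩ := ht
    have hq : q <+: u ++ v := ⟨t, ht⟩
    have hqne : q ≠ u ++ v := by rintro rfl; exact hne rfl
    rcases prefix_split hq with hqu | ⟨r, rfl, hr⟩
    · by_cases hqe : q = u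
      · subst hqe; simp [S_cons, hSu, wt]
      · have := hPu q hqu hqe
        simp only [S_cons, wt]; omega
    · have hrne : r ≠ v := by rintro rfl; exact hqne rfl
      have := hPv r hr hrne
      simp only [S_cons, S_append, hSu, wt]; omega

theorem prefix_eq (u v : List TSym) (hu : Vmem u) (hv : Vmem v) (h : u <+: v) : u = v := by
  by_contra hne
  have h1 := (good hu).1
  have h2 := (good hv).2 u h hne
  omega
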